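/- Let K be a positive integer, let P₀ be a set of probability density functions on ℝ^K, and let f₁ be a probability density function on ℝ^K. Then the mixture family F(P₀, f₁) is identifiable (for all a, b ∈ (0,1) and all h₀, g₀ ∈ P₀, a·f₁ + (1−a)·h₀ = b·f₁ + (1−b)·g₀ implies a = b and h₀ = g₀) if and only if F(P₀, f₁) ∩ P₀ = ∅. -/

import Mathlib

open MeasureTheory

/-- A probability density function on ℝ^K. -/
def IsPdf {K : ℕ} (f : (Fin K → ℝ) → ℝ) : Prop :=
  Measurable f ∧ (∀ x, 0 ≤ f x) ∧ ∫ x, f x = 1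

/-- The mixture family F(P₀, f₁). -/
def MixFam {K : ℕ} (P0 : Set ((Fin K → ℝ) → ℝ)) (f1 : (Fin K → ℝ) → ℝ) :
    Set ((Fin K → ℝ) → ℝ) :=
  {f | ∃ α ∈ Set.Ioo (0:ℝ) 1, ∃ f0 ∈ P0, f = fun x => α * f1 x + (1 - α) * f0 x}

theorem stmt1 (K : ℕ) (hK : 0 < K) (P0 : Set ((Fin K → ℝ) → ℝ))
    (f1 : (Fin K → ℝ) → ℝ) (hP0 : ∀ f ∈ P0, IsPdf f) (hf1 : IsPdf f1) :
    (∀ a ∈ Set.Ioo (0:ℝ) 1, ∀ b ∈ Set.Ioo (0:ℝ) 1, ∀ h0 ∈ P0, ∀ g0 ∈ P0,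
        (fun x => a * f1 x + (1 - a) * h0 x) = (fun x => b * f1 x + (1 - b) * g0 x) →
        a = b ∧ h0 = g0) ↔
    MixFam P0 f1 ∩ P0 = ∅ := by
  constructor
  · intro hid
    rw [Set.eq_empty_iff_forall_notMem]
    rintro g ⟨⟨α, ⟨hα0, hα1⟩, f0, hf0, hg⟩, hgP0⟩
    have hmem : (1/2 + α/2 : ℝ) ∈ Set.Ioo (0:ℝ) 1 := by
      constructor <;> [linarith; linarith]
    have hhalf : (1/2 : ℝ) ∈ Set.Ioo (0:ℝ) 1 := by norm_num
    have heq : (fun x => (1/2 + α/2) * f1 x + (1 - (1/2 + α/2)) * f0 x) =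
        (fun x => (1/2 : ℝ) * f1 x + (1 - 1/2) * g x) := by
      funext x
      have := congrFun hg x
      rw [this]
      ring
    have := (hid _ hmem _ hhalf f0 hf0 g hgP0 heq).1
    linarith
  · intro hempty a ⟨ha0, ha1⟩ b ⟨hb0, hb1⟩ h0 hh0 g0 hg0 heq
    have hab : a = b := by
      rcases lt_trichotomy a b with h | h | h
      · exfalso
        have h1a : (1:ℝ) - a ≠ 0 := by linarith
        have hmem : h0 ∈ MixFam P0 f1 ∩ P0 := by
          refine ⟨⟨(b - a)/(1 - a), ⟨div_pos (by linarith) (by linarith), ?_⟩, g0, hg0, ?_⟩, hh0⟩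
          · rw [div_lt_one (by linarith)]; linarith
          · funext x
            have := congrFun heq x
            field_simp
            linarith [this]
        rw [hempty] at hmem
        exact hmem
      · exact h
      · exfalso
        have h1b : (1:ℝ) - b ≠ 0 := by linarith
        have hmem : g0 ∈ MixFam P0 f1 ∩ P0 := by
          refine ⟨⟨(a - b)/(1 - b), ⟨div_pos (by linarith) (by linarith), ?_⟩, h0, hh0, ?_⟩, hg0⟩
          · rw [div_lt_one (by linarith)]; linarith
          · funext x
            have := congrFun heq x
            field_simp
            linarith [this]
        rw [hempty] at hmem
        exact hmem
    refine ⟨hab, ?_⟩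
    subst hab
    funext x
    have := congrFun heq x
    have h1a : (1:ℝ) - a ≠ 0 := by linarith
    have : (1 - a) * h0 x = (1 - a) * g0 x := by linarith
    exact mul_left_cancel₀ h1a this
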